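/- Let M be an N×N Hermitian complex matrix and let G be a k×N complex matrix with G G† = I_k (orthonormal rows). Then tr(G M G†) ≥ the sum of the k smallest eigenvalues of M (eigenvalues counted with multiplicity and listed in increasing order). -/

import Mathlib

open scoped Matrix Kronecker BigOperators ComplexOrder
open Matrix

/-- The positive-semidefinite square root of a PSD matrix (0 if not PSD). -/
noncomputable def psdSqrt {N : Type*} [Fintype N] [DecidableEq N] (A : Matrix N N ℂ) :
    Matrix N N ℂ :=
  open scoped Classical in
  if h : A.PosSemidef then
    h.1.eigenvectorUnitary.1 * diagonal ((↑) ∘ (√·) ∘ h.1.eigenvalues) *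
      (star h.1.eigenvectorUnitary : Matrix N N ℂ)
  else 0

/-- Squared Frobenius (Hilbert–Schmidt) norm: `‖X‖² = tr (Xᴴ X)`. -/
noncomputable def hsNormSq {N : Type*} [Fintype N] (X : Matrix N N ℂ) : ℝ :=
  (Matrix.trace (Xᴴ * X)).re

/-- A density matrix: positive semidefinite with unit trace. -/
def IsDensity {N : Type*} [Fintype N] [DecidableEq N] (ρ : Matrix N N ℂ) : Prop :=
  ρ.PosSemidef ∧ ρ.trace = 1

/-- Standard inner product on `ℂ^N`. -/
noncomputable def cInner {N : Type*} [Fintype N] (x y : N → ℂ) : ℂ :=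
  ∑ i, star (x i) * y i

/-- Outer product `ψ ψ†`. -/
noncomputable def outer {N : Type*} (ψ : N → ℂ) : Matrix N N ℂ :=
  Matrix.vecMulVec ψ (star ψ)

/-- The family of unit vectors of a rank-one von Neumann measurement: an orthonormal basis,
indexed by the dimension. -/
def IsVNM {N : Type*} [Fintype N] [DecidableEq N] (u : N → N → ℂ) : Prop :=
  ∀ a b, cInner (u a) (u b) = if a = b then (1 : ℂ) else 0

/-- The rank-one projection `Π_h = u_h u_h†` of a measurement. -/
noncomputable def projOf {N : Type*} (u : N → N → ℂ) (h : N) : Matrix N N ℂ :=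
  outer (u h)

/-- The measurement `{u_h u_h†}` fixes `σ`: `Σ_h Π_h σ Π_h = σ`. -/
def FixesVNM {N : Type*} [Fintype N] (u : N → N → ℂ) (σ : Matrix N N ℂ) : Prop :=
  ∑ h, projOf u h * σ * projOf u h = σ

/-- Reduced state of the second factor: `(ρ_B)_{j j'} = Σ_i ρ_{(i,j),(i,j')}`. -/
noncomputable def redB {m n : ℕ} (ρ : Matrix (Fin m × Fin n) (Fin m × Fin n) ℂ) :
    Matrix (Fin n) (Fin n) ℂ :=
  Matrix.of fun j j' => ∑ i, ρ (i, j) (i, j')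

/-- Reduced state of the first factor: `(ρ_C)_{k k'} = Σ_l ρ_{(k,l),(k',l)}`. -/
noncomputable def redC {u v : ℕ} (ρ : Matrix (Fin u × Fin v) (Fin u × Fin v) ℂ) :
    Matrix (Fin u) (Fin u) ℂ :=
  Matrix.of fun k k' => ∑ l, ρ (k, l) (k', l)

/-- `I_m ⊗ P ⊗ I_v` acting on the middle two factors. -/
noncomputable def ampMid (m v : ℕ) {n u : ℕ} (P : Matrix (Fin n × Fin u) (Fin n × Fin u) ℂ) :
    Matrix ((Fin m × Fin n) × Fin u × Fin v) ((Fin m × Fin n) × Fin u × Fin v) ℂ :=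
  Matrix.of fun p q =>
    (if p.1.1 = q.1.1 then (1 : ℂ) else 0) * P (p.1.2, p.2.1) (q.1.2, q.2.1) *
      (if p.2.2 = q.2.2 then (1 : ℂ) else 0)

/-- The map `Π^{BC}(X) = Σ_h (I_m ⊗ Π_h ⊗ I_v) X (I_m ⊗ Π_h ⊗ I_v)`. -/
noncomputable def pinchBC {m n u v : ℕ} (w : (Fin n × Fin u) → (Fin n × Fin u) → ℂ)
    (X : Matrix ((Fin m × Fin n) × Fin u × Fin v) ((Fin m × Fin n) × Fin u × Fin v) ℂ) :
    Matrix ((Fin m × Fin n) × Fin u × Fin v) ((Fin m × Fin n) × Fin u × Fin v) ℂ :=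
  ∑ h, ampMid m v (projOf w h) * X * ampMid m v (projOf w h)

/-- The measurement-induced nonbilocality `N_H^b(ρ_AB ⊗ ρ_CD)`. -/
noncomputable def NHb {m n u v : ℕ}
    (ρAB : Matrix (Fin m × Fin n) (Fin m × Fin n) ℂ)
    (ρCD : Matrix (Fin u × Fin v) (Fin u × Fin v) ℂ) : ℝ :=
  sSup { r : ℝ | ∃ w : (Fin n × Fin u) → (Fin n × Fin u) → ℂ,
    IsVNM w ∧ FixesVNM w (redB ρAB ⊗ₖ redC ρCD) ∧
    r = hsNormSq (psdSqrt (ρAB ⊗ₖ ρCD) - pinchBC w (psdSqrt (ρAB ⊗ₖ ρCD))) }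


/-- Combinatorial lemma: weights in [0,1] summing to k, monotone e. -/
lemma key_comb {N k : ℕ} (e c : Fin N → ℝ) (hmono : Monotone e)
    (h0 : ∀ s, 0 ≤ c s) (h1 : ∀ s, c s ≤ 1) (hsum : ∑ s, c s = (k : ℝ)) :
    (∑ s : Fin N, if (s : ℕ) < k then e s else 0) ≤ ∑ s, e s * c s := by
  have hkN : k ≤ N := by
    have : (k : ℝ) ≤ (N : ℝ) := by
      rw [← hsum]
      calc ∑ s, c s ≤ ∑ s : Fin N, (1:ℝ) := Finset.sum_le_sum fun s _ => h1 s
        _ = N := by simp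
    exact_mod_cast this
  rcases lt_or_eq_of_le hkN with hk | hk
  · -- k < N, use threshold t = e ⟨k⟩
    set t := e ⟨k, hk⟩ with ht
    set χ : Fin N → ℝ := fun s => if (s : ℕ) < k then 1 else 0 with hχ
    have hχsum : ∑ s, χ s = (k : ℝ) := by
      have hfe : Finset.filter (fun i : Fin N => (i:ℕ) < k) Finset.univ
          = Finset.Iio (⟨k, hk⟩ : Fin N) := by
        ext i; simp [Fin.lt_def]
      rw [show (∑ s, χ s) = ↑(Finset.filter (fun i : Fin N => (i:ℕ) < k) Finset.univ).card
        from by simp [hχ, Finset.sum_boole], hfe, Fin.card_Iio]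
    have hterm : ∀ s : Fin N, 0 ≤ (e s - t) * (c s - χ s) := by
      intro s
      by_cases hs : (s : ℕ) < k
      · have h1' : e s ≤ t := hmono (by simp [Fin.le_def]; omega)
        have h2' : c s - χ s ≤ 0 := by simp [hχ, hs]; linarith [h1 s]
        have := mul_nonneg (a := t - e s) (b := χ s - c s) (by linarith) (by linarith)
        nlinarith [this]
      · have h1' : t ≤ e s := hmono (by simp [Fin.le_def]; omega)
        have h2' : 0 ≤ c s - χ s := by simp [hχ, hs]; exact h0 s
        exact mul_nonneg (by linarith) h2'
    have hpos : 0 ≤ ∑ s, (e s - t) * (c s - χ s) :=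
      Finset.sum_nonneg fun s _ => hterm s
    have hexpand : ∑ s, (e s - t) * (c s - χ s)
        = (∑ s, e s * c s) - (∑ s, e s * χ s) - t * ((∑ s, c s) - (∑ s, χ s)) := by
      rw [mul_sub, Finset.mul_sum, Finset.mul_sum, ← Finset.sum_sub_distrib,
        ← Finset.sum_sub_distrib, ← Finset.sum_sub_distrib]
      apply Finset.sum_congr rfl; intro s _; ring
    have hχe : ∑ s, e s * χ s = ∑ s : Fin N, if (s : ℕ) < k then e s else 0 := by
      apply Finset.sum_congr rfl; intro s _
      by_cases hs : (s : ℕ) < k <;> simp [hχ, hs]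
    rw [hexpand, hsum, hχsum, sub_self, mul_zero, sub_zero, hχe] at hpos
    linarith
  · -- k = N : all weights equal 1
    subst hk
    have hall : ∀ s : Fin k, c s = 1 := by
      intro s
      by_contra hne
      have hlt : c s < 1 := lt_of_le_of_ne (h1 s) hne
      have : ∑ x, c x < ∑ x : Fin k, (1:ℝ) := by
        apply Finset.sum_lt_sum (fun x _ => h1 x) ⟨s, Finset.mem_univ s, hlt⟩
      simp [hsum] at this
    have : ∀ s : Fin k, (if (s : ℕ) < k then e s else 0) = e s * c s := by
      intro s; simp [s.isLt, hall s]
    exact le_of_eq (Finset.sum_congr rfl fun s _ => this s)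


lemma matrix_side {N k : ℕ} (M : Matrix (Fin N) (Fin N) ℂ) (hM : M.IsHermitian)
    (G : Matrix (Fin k) (Fin N) ℂ) (hG : G * Gᴴ = 1) :
    ∃ c : Fin N → ℝ, (∀ s, 0 ≤ c s) ∧ (∀ s, c s ≤ 1) ∧ (∑ s, c s = (k : ℝ)) ∧
      (Matrix.trace (G * M * Gᴴ)).re = ∑ s, hM.eigenvalues s * c s := by
  obtain ⟨U, hU⟩ : ∃ U, U = (hM.eigenvectorUnitary : Matrix (Fin N) (Fin N) ℂ) := ⟨_, rfl⟩
  obtain ⟨B, hB⟩ : ∃ B, B = G * U := ⟨_, rfl⟩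
  have hUU : U * Uᴴ = 1 := by
    rw [hU, ← Matrix.star_eq_conjTranspose]
    exact (Matrix.mem_unitaryGroup_iff).mp hM.eigenvectorUnitary.2
  have hBB : B * Bᴴ = 1 := by
    rw [hB, Matrix.conjTranspose_mul, ← Matrix.mul_assoc, Matrix.mul_assoc G, hUU, Matrix.mul_one, hG]
  refine ⟨fun s => ∑ h, Complex.normSq (B h s), ?_, ?_, ?_, ?_⟩
  · exact fun s => Finset.sum_nonneg fun h _ => Complex.normSq_nonneg _
  · -- c s ≤ 1
    intro s
    obtain ⟨Q, hQ⟩ : ∃ Q, Q = (1 : Matrix (Fin N) (Fin N) ℂ) - Bᴴ * B := ⟨_, rfl⟩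
    have hPH : (Bᴴ * B)ᴴ = Bᴴ * B := by
      rw [Matrix.conjTranspose_mul, Matrix.conjTranspose_conjTranspose]
    have hQH : Qᴴ = Q := by
      rw [hQ, Matrix.conjTranspose_sub, Matrix.conjTranspose_one, hPH]
    have hPP : (Bᴴ * B) * (Bᴴ * B) = Bᴴ * B := by
      rw [Matrix.mul_assoc, ← Matrix.mul_assoc B, hBB, Matrix.one_mul]
    have hQQ : Q = Qᴴ * Q := by
      rw [hQH, hQ, sub_mul, mul_sub, mul_sub, mul_one, one_mul, mul_one, hPP]
      abel
    have hQre : 0 ≤ (Q s s).re := by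
      rw [hQQ, Matrix.mul_apply, Complex.re_sum]
      apply Finset.sum_nonneg
      intro t _
      rw [Matrix.conjTranspose_apply, Complex.star_def, mul_comm, Complex.mul_conj]
      simp [Complex.normSq_nonneg]
    have hQs : (Q s s).re = 1 - ∑ h, Complex.normSq (B h s) := by
      rw [hQ]
      simp only [Matrix.sub_apply, Matrix.one_apply_eq, Complex.sub_re, Complex.one_re]
      congr 1
      rw [Matrix.mul_apply, Complex.re_sum]
      apply Finset.sum_congr rfl
      intro h _
      rw [Matrix.conjTranspose_apply, Complex.star_def, mul_comm, Complex.mul_conj]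
      simp
    rw [hQs] at hQre
    linarith
  · -- sum = k
    have h1 : Matrix.trace (Bᴴ * B) = Matrix.trace (B * Bᴴ) := Matrix.trace_mul_comm _ _
    rw [hBB, Matrix.trace_one] at h1
    simp only [Fintype.card_fin] at h1
    have h2 : Matrix.trace (Bᴴ * B) = ((∑ s, ∑ h, Complex.normSq (B h s) : ℝ) : ℂ) := by
      rw [Matrix.trace]
      push_cast
      apply Finset.sum_congr rfl
      intro s _
      rw [Matrix.diag_apply, Matrix.mul_apply]
      apply Finset.sum_congr rfl
      intro h _
      rw [Matrix.conjTranspose_apply, Complex.star_def, mul_comm, Complex.mul_conj]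
    rw [h2] at h1
    exact_mod_cast h1
  · -- trace identity
    have hMeq : G * M * Gᴴ = B * Matrix.diagonal (fun s => (hM.eigenvalues s : ℂ)) * Bᴴ := by
      conv_lhs => rw [hM.spectral_theorem, Unitary.conjStarAlgAut_apply]
      rw [hB, ← hU, Matrix.conjTranspose_mul, Matrix.star_eq_conjTranspose]
      simp only [Function.comp_def, Matrix.mul_assoc]
      rfl
    rw [hMeq, Matrix.trace]
    have hentry : ∀ i : Fin k,
        ((B * Matrix.diagonal (fun s => (hM.eigenvalues s : ℂ))) * Bᴴ) i i
          = ∑ x, B i x * (hM.eigenvalues x : ℂ) * star (B i x) := by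
      intro i
      rw [Matrix.mul_apply]
      apply Finset.sum_congr rfl
      intro x _
      rw [Matrix.mul_diagonal, Matrix.conjTranspose_apply]
    simp only [Matrix.diag_apply, hentry]
    simp only [Complex.re_sum]
    rw [Finset.sum_comm]
    apply Finset.sum_congr rfl
    intro s _
    rw [Finset.mul_sum]
    apply Finset.sum_congr rfl
    intro h _
    rw [mul_comm (B h s), mul_assoc, Complex.star_def, Complex.mul_conj,
      ← Complex.ofReal_mul]
    exact Complex.ofReal_re _

/-- If G has orthonormal rows (`G G† = I_k`) and M is Hermitian, then
`tr(G M G†)` is at least the sum of the k smallest eigenvalues of M. -/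
theorem stmt12 {N k : ℕ} (M : Matrix (Fin N) (Fin N) ℂ) (hM : M.IsHermitian)
    (G : Matrix (Fin k) (Fin N) ℂ) (hG : G * Gᴴ = 1)
    (e : Fin N → ℝ) (hmono : Monotone e)
    (hperm : ∃ g : Equiv.Perm (Fin N), ∀ s, e s = hM.eigenvalues (g s)) :
    (∑ s : Fin N, if (s : ℕ) < k then e s else 0) ≤ (Matrix.trace (G * M * Gᴴ)).re := by
  obtain ⟨c, hc0, hc1, hcsum, htr⟩ := matrix_side M hM G hG
  obtain ⟨g, hg⟩ := hperm
  have hkey := key_comb e (fun s => c (g s)) hmono (fun s => hc0 _) (fun s => hc1 _)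
    (by rw [← hcsum]; exact Equiv.sum_comp g c)
  rw [htr]
  refine le_trans hkey (le_of_eq ?_)
  rw [← Equiv.sum_comp g (fun s => hM.eigenvalues s * c s)]
  exact Finset.sum_congr rfl fun s _ => by rw [hg]
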